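/- Let k be a field, d ≥ 3, and let a_1 < a_2 < … < a_d be positive integers forming an arithmetic progression with gcd(a_1,…,a_d) = 1. Let p(a) ⊆ k[X_1,…,X_d] be the kernel of the k-algebra homomorphism sending X_i to T^{a_i}. Then there exist d−1 elements f_1,…,f_{d−1} ∈ p(a) such that √(f_1,…,f_{d−1}) = p(a); that is, p(a) is a set-theoretic complete intersection. -/

import Mathlib

noncomputable section

namespace PatilSTCI

open MvPolynomial Finset

/-- Index into `Fin (D+3)`. -/
def idx (D n : ℕ) : Fin (D + 3) := ⟨n % (D + 3), Nat.mod_lt _ (by omega)⟩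

lemma idx_val {D n : ℕ} (h : n < D + 3) : ((idx D n : Fin (D + 3)) : ℕ) = n :=
  Nat.mod_eq_of_lt h

lemma idx_self {D : ℕ} (i : Fin (D + 3)) : idx D (i : ℕ) = i := by
  apply Fin.ext
  exact Nat.mod_eq_of_lt i.isLt

variable (k : Type*) [Field k]

/-- The chain polynomial (`H_{n+1}` in informal notation), used for `1 ≤ n ≤ D+1`. -/
def chain (D n : ℕ) : MvPolynomial (Fin (D + 3)) k :=
  ∑ j ∈ Finset.range (n + 1),
    ((-1 : ℤ) ^ j * (n.choose j : ℤ)) •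
      (X (idx D n) ^ j * X (idx D j) * X (idx D (n + 1)) ^ (n - j))

def qq (D A j : ℕ) : ℕ := ((D + 2 - j) * A) / (D + 2)
def rr (D A j : ℕ) : ℕ := ((D + 2 - j) * A) % (D + 2)
def pp (D A m j : ℕ) : ℕ := A + j * m - qq D A j - 1

/-- The last polynomial. -/
def lastP (D A m : ℕ) : MvPolynomial (Fin (D + 3)) k :=
  X (idx D (D + 2)) ^ A +
    ∑ j ∈ Finset.Ico 1 (D + 3),
      ((-1 : ℤ) ^ j * ((D + 2).choose j : ℤ)) •
        (X (idx D (D + 2)) ^ qq D A j * X (idx D (rr D A j)) * X (idx D 0) ^ pp D A m j)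

lemma qq_le (D A j : ℕ) : qq D A j ≤ A := by
  have h1 : (D + 2 - j) * A ≤ (D + 2) * A := Nat.mul_le_mul_right _ (by omega)
  calc qq D A j ≤ ((D + 2) * A) / (D + 2) := Nat.div_le_div_right h1
    _ = A := Nat.mul_div_cancel_left _ (by omega)

lemma rr_lt (D A j : ℕ) : rr D A j < D + 2 := Nat.mod_lt _ (by omega)

lemma qq_rr (D A j : ℕ) : (D + 2) * qq D A j + rr D A j = (D + 2 - j) * A :=
  Nat.div_add_mod _ _

lemma qq_pp (D A m j : ℕ) (hj : 1 ≤ j) (hm : 1 ≤ m) :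
    qq D A j + 1 + pp D A m j = A + j * m := by
  have h1 : qq D A j ≤ A := qq_le D A j
  have h2 : 1 ≤ j * m := Nat.mul_pos hj hm
  unfold pp
  omega


section Membership

variable (D A m : ℕ)

/-- Evaluation map to `k[T]`. -/
abbrev piMap : MvPolynomial (Fin (D + 3)) k →ₐ[k] Polynomial k :=
  aeval (fun i : Fin (D + 3) => (Polynomial.X : Polynomial k) ^ (A + (i : ℕ) * m))

lemma chain_mem (n : ℕ) (hn : 1 ≤ n) (hn2 : n + 1 ≤ D + 2) :
    piMap k D A m (chain k D n) = 0 := by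
  rw [chain, map_sum]
  have hterm : ∀ j ∈ Finset.range (n + 1),
      (piMap k D A m)
        (((-1 : ℤ) ^ j * (n.choose j : ℤ)) •
          (X (idx D n) ^ j * X (idx D j) * X (idx D (n + 1)) ^ (n - j)))
      = ((-1 : ℤ) ^ j * (n.choose j : ℤ)) •
          (Polynomial.X : Polynomial k) ^ ((n + 1) * A + (n + 1) * n * m) := by
    intro j hj
    have hj' : j ≤ n := by simpa [Nat.lt_succ_iff] using hj
    rw [map_zsmul, map_mul, map_mul, map_pow, map_pow, aeval_X, aeval_X, aeval_X,
      idx_val (by omega), idx_val (by omega), idx_val (by omega),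
      ← pow_mul, ← pow_mul, ← pow_add, ← pow_add]
    have hE : (A + n * m) * j + (A + j * m) + (A + (n + 1) * m) * (n - j)
        = (n + 1) * A + (n + 1) * n * m := by
      zify [hj']
      ring
    rw [hE]
  rw [Finset.sum_congr rfl hterm, ← Finset.sum_smul,
    Int.alternating_sum_range_choose_of_ne (by omega), zero_smul]

lemma last_mem (hm : 1 ≤ m) :
    piMap k D A m (lastP k D A m) = 0 := by
  have hNe : ∀ j ∈ Finset.Ico 1 (D + 3),
      (piMap k D A m)
        (((-1 : ℤ) ^ j * ((D + 2).choose j : ℤ)) •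
          (X (idx D (D + 2)) ^ qq D A j * X (idx D (rr D A j)) * X (idx D 0) ^ pp D A m j))
      = ((-1 : ℤ) ^ j * ((D + 2).choose j : ℤ)) •
          (Polynomial.X : Polynomial k) ^ ((A + (D + 2) * m) * A) := by
    intro j hj
    rw [Finset.mem_Ico] at hj
    rw [map_zsmul, map_mul, map_mul, map_pow, map_pow, aeval_X, aeval_X, aeval_X,
      idx_val (n := D + 2) (by omega), idx_val (n := rr D A j) (by have := rr_lt D A j; omega),
      idx_val (n := 0) (by omega),
      ← pow_mul, ← pow_mul, ← pow_add, ← pow_add]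
    have h1 : (D + 2) * qq D A j + rr D A j = (D + 2 - j) * A := qq_rr D A j
    have h2 : qq D A j + 1 + pp D A m j = A + j * m := qq_pp D A m j hj.1 hm
    have hE : (A + (D + 2) * m) * qq D A j + (A + rr D A j * m) + (A + 0 * m) * pp D A m j
        = (A + (D + 2) * m) * A := by
      have hj2 : j ≤ D + 2 := by omega
      zify [hj2] at h1 h2 ⊢
      linear_combination (m : ℤ) * h1 + (A : ℤ) * h2
    rw [hE]
  rw [lastP, map_add, map_sum, map_pow, aeval_X, idx_val (n := D + 2) (by omega), ← pow_mul,
    Finset.sum_congr rfl hNe, ← Finset.sum_smul]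
  have hsum : (∑ j ∈ Finset.Ico 1 (D + 3), ((-1 : ℤ) ^ j * ((D + 2).choose j : ℤ))) = -1 := by
    have h0 := Int.alternating_sum_range_choose_of_ne (n := D + 2) (by omega)
    rw [Finset.range_eq_Ico, Finset.sum_eq_sum_Ico_succ_bot (by omega : 0 < D + 3)] at h0
    simp only [zero_add, pow_zero, one_mul, Nat.choose_zero_right, Nat.cast_one] at h0
    linarith
  rw [hsum]
  simp

end Membership


section Evaluation

variable {K : Type*} [Field K] [Algebra k K]

lemma key_sum {L : Type*} [CommRing L] (u w : L) (n : ℕ) :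
    ∑ j ∈ Finset.range (n + 1), ((-1 : ℤ) ^ j * (n.choose j : ℤ)) • (u ^ j * w ^ (n - j))
      = (w - u) ^ n := by
  rw [sub_eq_add_neg, add_comm w (-u), add_pow]
  refine Finset.sum_congr rfl ?_
  intro j hj
  rw [zsmul_eq_mul]
  push_cast
  rw [neg_pow]
  ring

lemma chain_eval_gp (D n : ℕ) (x : Fin (D + 3) → K) (s v : K)
    (hgp : ∀ i, i ≤ n → x (idx D i) = s * v ^ i) :
    aeval x (chain k D n) = s * (x (idx D (n + 1)) - s * v ^ (n + 1)) ^ n := by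
  rw [chain, map_sum]
  have hterm : ∀ j ∈ Finset.range (n + 1),
      (aeval x : MvPolynomial (Fin (D + 3)) k →ₐ[k] K) (((-1 : ℤ) ^ j * (n.choose j : ℤ)) •
          (X (idx D n) ^ j * X (idx D j) * X (idx D (n + 1)) ^ (n - j)))
      = s * (((-1 : ℤ) ^ j * (n.choose j : ℤ)) •
          ((s * v ^ (n + 1)) ^ j * (x (idx D (n + 1))) ^ (n - j))) := by
    intro j hj
    have hj' : j ≤ n := by simpa [Nat.lt_succ_iff] using hj
    rw [map_zsmul, map_mul, map_mul, map_pow, map_pow, aeval_X, aeval_X, aeval_X,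
      hgp n le_rfl, hgp j hj', zsmul_eq_mul, zsmul_eq_mul]
    push_cast
    ring
  rw [Finset.sum_congr rfl hterm, ← Finset.mul_sum, key_sum]

lemma chain_deg (D n : ℕ) (hn : 1 ≤ n) (x : Fin (D + 3) → K)
    (h0 : ∀ i, i < n → x (idx D i) = 0)
    (heq : aeval x (chain k D n) = 0) : x (idx D n) = 0 := by
  rw [chain, map_sum, Finset.sum_range_succ] at heq
  have hz : ∀ j ∈ Finset.range n,
      (aeval x : MvPolynomial (Fin (D + 3)) k →ₐ[k] K) (((-1 : ℤ) ^ j * (n.choose j : ℤ)) •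
          (X (idx D n) ^ j * X (idx D j) * X (idx D (n + 1)) ^ (n - j))) = 0 := by
    intro j hj
    rw [map_zsmul, map_mul, map_mul, map_pow, map_pow, aeval_X, aeval_X, aeval_X,
      h0 j (Finset.mem_range.mp hj)]
    simp
  rw [Finset.sum_eq_zero hz, zero_add] at heq
  simp only [map_zsmul, map_mul, map_pow, aeval_X] at heq
  simp only [Nat.sub_self, pow_zero, mul_one, Nat.choose_self, Nat.cast_one,
    zsmul_eq_mul, Int.cast_mul, Int.cast_pow, Int.cast_neg, Int.cast_one] at heq
  have h1 : (x (idx D n)) ^ n * x (idx D n) = 0 := by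
    rcases mul_eq_zero.mp heq with h | h
    · exact absurd h (pow_ne_zero _ (by norm_num))
    · exact h
  rw [← pow_succ] at h1
  exact pow_eq_zero_iff (Nat.succ_ne_zero n) |>.mp h1

lemma last_eval_gp (D A m : ℕ) (hm : 1 ≤ m) (x : Fin (D + 3) → K) (s v : K)
    (hgp : ∀ i, i ≤ D + 2 → x (idx D i) = s * v ^ i) :
    aeval x (lastP k D A m) = s ^ A * (v ^ A - s ^ m) ^ (D + 2) := by
  rw [lastP, map_add, map_sum, map_pow, aeval_X, hgp (D + 2) le_rfl]
  have hterm : ∀ j ∈ Finset.Ico 1 (D + 3),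
      (aeval x : MvPolynomial (Fin (D + 3)) k →ₐ[k] K) (((-1 : ℤ) ^ j * ((D + 2).choose j : ℤ)) •
          (X (idx D (D + 2)) ^ qq D A j * X (idx D (rr D A j)) * X (idx D 0) ^ pp D A m j))
      = s ^ A * (((-1 : ℤ) ^ j * ((D + 2).choose j : ℤ)) •
          ((s ^ m) ^ j * (v ^ A) ^ (D + 2 - j))) := by
    intro j hj
    rw [Finset.mem_Ico] at hj
    have h1 : (D + 2) * qq D A j + rr D A j = (D + 2 - j) * A := qq_rr D A j
    have h2 : qq D A j + 1 + pp D A m j = A + j * m := qq_pp D A m j hj.1 hm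
    rw [map_zsmul, map_mul, map_mul, map_pow, map_pow, aeval_X, aeval_X, aeval_X,
      hgp (D + 2) le_rfl, hgp (rr D A j) (le_of_lt (by have := rr_lt D A j; omega)),
      hgp 0 (by omega), zsmul_eq_mul, zsmul_eq_mul]
    push_cast
    have hmon : (s * v ^ (D + 2)) ^ qq D A j * (s * v ^ rr D A j) * (s * v ^ 0) ^ pp D A m j
        = s ^ A * ((s ^ m) ^ j * (v ^ A) ^ (D + 2 - j)) := by
      calc (s * v ^ (D + 2)) ^ qq D A j * (s * v ^ rr D A j) * (s * v ^ 0) ^ pp D A m j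
          = s ^ (qq D A j + 1 + pp D A m j) * v ^ ((D + 2) * qq D A j + rr D A j) := by
            ring
        _ = s ^ (A + j * m) * v ^ ((D + 2 - j) * A) := by rw [h2, h1]
        _ = s ^ A * ((s ^ m) ^ j * (v ^ A) ^ (D + 2 - j)) := by
            rw [pow_add, ← pow_mul, ← pow_mul, mul_comm j m, mul_comm (D + 2 - j) A, mul_assoc]
    rw [hmon]
    ring
  rw [Finset.sum_congr rfl hterm, ← Finset.mul_sum]
  have hlead : (s * v ^ (D + 2)) ^ A
      = s ^ A * (((-1 : ℤ) ^ 0 * ((D + 2).choose 0 : ℤ)) • ((s ^ m) ^ 0 * (v ^ A) ^ (D + 2 - 0))) := by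
    simp only [pow_zero, Nat.choose_zero_right, Nat.cast_one, mul_one, one_mul, one_smul,
      Nat.sub_zero]
    rw [mul_pow, ← pow_mul, mul_comm (D + 2) A, pow_mul]
  rw [hlead, ← mul_add]
  congr 1
  have hsplit : ∑ j ∈ Finset.range (D + 3),
      ((-1 : ℤ) ^ j * ((D + 2).choose j : ℤ)) • ((s ^ m) ^ j * (v ^ A) ^ (D + 2 - j))
      = ((-1 : ℤ) ^ 0 * ((D + 2).choose 0 : ℤ)) • ((s ^ m) ^ 0 * (v ^ A) ^ (D + 2 - 0))
        + ∑ j ∈ Finset.Ico 1 (D + 3),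
          ((-1 : ℤ) ^ j * ((D + 2).choose j : ℤ)) • ((s ^ m) ^ j * (v ^ A) ^ (D + 2 - j)) := by
    rw [Finset.range_eq_Ico, Finset.sum_eq_sum_Ico_succ_bot (by omega : 0 < D + 3)]
  rw [← hsplit, key_sum]

lemma last_deg (D A m : ℕ) (x : Fin (D + 3) → K)
    (h0 : ∀ i, i < D + 2 → x (idx D i) = 0) :
    aeval x (lastP k D A m) = x (idx D (D + 2)) ^ A := by
  rw [lastP, map_add, map_sum, map_pow, aeval_X]
  have hz : ∀ j ∈ Finset.Ico 1 (D + 3),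
      (aeval x : MvPolynomial (Fin (D + 3)) k →ₐ[k] K) (((-1 : ℤ) ^ j * ((D + 2).choose j : ℤ)) •
          (X (idx D (D + 2)) ^ qq D A j * X (idx D (rr D A j)) * X (idx D 0) ^ pp D A m j)) = 0 := by
    intro j hj
    rw [map_zsmul, map_mul, map_mul, map_pow, map_pow, aeval_X, aeval_X, aeval_X,
      h0 (rr D A j) (rr_lt D A j)]
    simp
  rw [Finset.sum_eq_zero hz, add_zero]

end Evaluation


section MainPoint

variable {K : Type*} [Field K] [Algebra k K]

lemma units_bezout {K' : Type*} [Field K'] (A m : ℕ) (hA : 0 < A) (hm : 0 < m)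
    (hco : Nat.Coprime A m) (s v : K') (hs : s ≠ 0) (hv : v ≠ 0)
    (hrel : v ^ A = s ^ m) : ∃ t : K', s = t ^ A ∧ v = t ^ m := by
  set S : K'ˣ := Units.mk0 s hs with hS
  set V : K'ˣ := Units.mk0 v hv with hV
  have hrelU : V ^ (A : ℤ) = S ^ (m : ℤ) := by
    rw [zpow_natCast, zpow_natCast]
    ext
    push_cast [hS, hV]
    exact hrel
  obtain ⟨α, β, hb⟩ : ∃ α β : ℤ, (A : ℤ) * α + (m : ℤ) * β = 1 := by
    refine ⟨Nat.gcdA A m, Nat.gcdB A m, ?_⟩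
    have := Nat.gcd_eq_gcd_ab A m
    rw [hco] at this
    push_cast at this
    linarith
  set T : K'ˣ := V ^ β * S ^ α with hT
  have h3 : ∀ c : ℤ, T ^ c = (V ^ c) ^ β * (S ^ c) ^ α := by
    intro c
    rw [hT, mul_zpow, ← zpow_mul, ← zpow_mul, ← zpow_mul, ← zpow_mul,
      mul_comm β c, mul_comm α c]
  have hTA : T ^ (A : ℤ) = S := by
    rw [h3, hrelU, ← zpow_mul, ← zpow_mul, ← zpow_add,
      show (m : ℤ) * β + (A : ℤ) * α = 1 by linarith, zpow_one]
  have hTm : T ^ (m : ℤ) = V := by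
    rw [h3, ← hrelU, ← zpow_mul, ← zpow_mul, ← zpow_add,
      show (m : ℤ) * β + (A : ℤ) * α = 1 by linarith, zpow_one]
  refine ⟨(T : K'), ?_, ?_⟩
  · have : (T ^ (A : ℕ) : K'ˣ) = S := by rw [← zpow_natCast, hTA]
    calc s = ((S : K'ˣ) : K') := rfl
      _ = ((T ^ (A : ℕ) : K'ˣ) : K') := by rw [this]
      _ = (T : K') ^ A := by push_cast; ring
  · have : (T ^ (m : ℕ) : K'ˣ) = V := by rw [← zpow_natCast, hTm]
    calc v = ((V : K'ˣ) : K') := rfl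
      _ = ((T ^ (m : ℕ) : K'ˣ) : K') := by rw [this]
      _ = (T : K') ^ m := by push_cast; ring

lemma main_point (D A m : ℕ) (hA : 0 < A) (hm : 0 < m) (hco : Nat.Coprime A m)
    (x : Fin (D + 3) → K)
    (hchain : ∀ n, 1 ≤ n → n ≤ D + 1 → aeval x (chain k D n) = 0)
    (hlast : aeval x (lastP k D A m) = 0) :
    ∃ t : K, ∀ i : Fin (D + 3), x i = t ^ (A + (i : ℕ) * m) := by
  by_cases h0 : x (idx D 0) = 0
  · -- degenerate branch: everything is zero
    have hz : ∀ n, n ≤ D + 1 → x (idx D n) = 0 := by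
      intro n
      induction n using Nat.strong_induction_on with
      | _ n ih =>
        intro hn
        rcases Nat.eq_zero_or_pos n with rfl | hn1
        · exact h0
        · exact chain_deg k D n hn1 x (fun i hi => ih i hi (by omega))
            (hchain n hn1 (by omega))
    have hz2 : x (idx D (D + 2)) = 0 := by
      have h := hlast
      rw [last_deg k D A m x (fun i hi => hz i (by omega))] at h
      exact pow_eq_zero_iff (by omega) |>.mp h
    refine ⟨0, fun i => ?_⟩
    rw [zero_pow (by omega), ← idx_self i]
    have hi : (i : ℕ) < D + 3 := i.isLt
    rcases Nat.lt_or_ge (i : ℕ) (D + 2) with h | h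
    · exact hz _ (by omega)
    · have : (i : ℕ) = D + 2 := by omega
      rw [this]; exact hz2
  · -- generic branch
    set s := x (idx D 0) with hs
    set v := x (idx D 1) / x (idx D 0) with hv
    have hgp : ∀ n, n ≤ D + 2 → x (idx D n) = s * v ^ n := by
      intro n
      induction n using Nat.strong_induction_on with
      | _ n ih =>
        intro hn
        match n with
        | 0 => simp; exact hs.symm
        | 1 =>
          rw [pow_one, hv, hs, mul_div_cancel₀]
          exact h0
        | (n + 2) =>
          have hev := chain_eval_gp k D (n + 1) x s v (fun i hi => ih i (by omega) (by omega))
          rw [hchain (n + 1) (by omega) (by omega)] at hev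
          have h1 := (mul_eq_zero.mp hev.symm).resolve_left h0
          have h2 := pow_eq_zero_iff (Nat.succ_ne_zero n) |>.mp h1
          have := sub_eq_zero.mp h2
          exact this
    have hev := last_eval_gp k D A m hm x s v (fun i hi => hgp i hi)
    rw [hlast] at hev
    have h1 := (mul_eq_zero.mp hev.symm).resolve_left (pow_ne_zero _ h0)
    have h2 : v ^ A = s ^ m := sub_eq_zero.mp (pow_eq_zero_iff (by omega) |>.mp h1)
    have hvne : v ≠ 0 := by
      intro hveq
      rw [hveq, zero_pow (by omega)] at h2
      exact h0 (pow_eq_zero_iff (by omega) |>.mp h2.symm)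
    obtain ⟨t, hts, htv⟩ := units_bezout A m hA hm hco s v h0 hvne h2
    refine ⟨t, fun i => ?_⟩
    have hi : (i : ℕ) ≤ D + 2 := by have := i.isLt; omega
    have hgoal : x (idx D (i : ℕ)) = t ^ (A + (i : ℕ) * m) := by
      rw [hgp (i : ℕ) hi, hts, htv, ← pow_mul, mul_comm m (i : ℕ), ← pow_add]
    rw [← hgoal, idx_self]

end MainPoint

end PatilSTCI

end

/-- The prime ideal defining the monomial curve `C(a)`: the kernel of the `k`-algebra
map `k[X_1, …, X_d] → k[T]`, `X_i ↦ T^{a i}`. -/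
noncomputable def monomialCurveIdeal (k : Type*) [Field k] {d : ℕ} (a : Fin d → ℕ) :
    Ideal (MvPolynomial (Fin d) k) :=
  RingHom.ker (MvPolynomial.aeval (R := k) fun i => (Polynomial.X : Polynomial k) ^ a i)

set_option synthInstance.maxHeartbeats 1000000 in
set_option maxHeartbeats 2000000 in
/-- **Patil (1990).** A monomial curve in `𝔸^d` given by an increasing arithmetic
progression `a_1 < a_2 < ⋯ < a_d` with `gcd(a_1, …, a_d) = 1` is a set-theoretic
complete intersection. -/
theorem patil_arithmetic_progression_stci (k : Type*) [Field k] (d : ℕ) (hd : 3 ≤ d)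
    (a : Fin d → ℕ)
    (hap : ∃ a₁ m : ℕ, 0 < a₁ ∧ 0 < m ∧ ∀ i : Fin d, a i = a₁ + i.val * m)
    (hgcd : Finset.univ.gcd a = 1) :
    ∃ f : Fin (d - 1) → MvPolynomial (Fin d) k,
      (∀ i, f i ∈ monomialCurveIdeal k a) ∧
      (Ideal.span (Set.range f)).radical = monomialCurveIdeal k a := by
  classical
  obtain ⟨A, m, hA, hm, ha⟩ := hap
  obtain ⟨D, rfl⟩ : ∃ D, d = D + 3 := ⟨d - 3, by omega⟩
  -- coprimality of A and m
  have hco : Nat.Coprime A m := by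
    have hdvd : Nat.gcd A m ∣ Finset.univ.gcd a := by
      refine Finset.dvd_gcd fun i _ => ?_
      rw [ha i]
      exact Nat.dvd_add (Nat.gcd_dvd_left _ _) (Dvd.dvd.mul_left (Nat.gcd_dvd_right A m) _)
    rw [hgcd] at hdvd
    exact Nat.dvd_one.mp hdvd
  have hfun : (fun i : Fin (D + 3) => (Polynomial.X : Polynomial k) ^ a i)
      = fun i : Fin (D + 3) => (Polynomial.X : Polynomial k) ^ (A + (i : ℕ) * m) := by
    funext i
    rw [ha i]
  -- the system of d - 1 polynomials
  set f : Fin (D + 3 - 1) → MvPolynomial (Fin (D + 3)) k := fun i =>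
    if (i : ℕ) ≤ D then PatilSTCI.chain k D ((i : ℕ) + 1) else PatilSTCI.lastP k D A m
    with hf
  have hmem : ∀ i, f i ∈ monomialCurveIdeal k a := by
    intro i
    rw [monomialCurveIdeal, RingHom.mem_ker, hfun]
    simp only [hf]
    by_cases h : (i : ℕ) ≤ D
    · rw [if_pos h]
      exact PatilSTCI.chain_mem k D A m ((i : ℕ) + 1) (by omega) (by omega)
    · rw [if_neg h]
      exact PatilSTCI.last_mem k D A m hm
  refine ⟨f, hmem, le_antisymm ?_ ?_⟩
  · -- radical span ≤ p
    have hspan : Ideal.span (Set.range f) ≤ monomialCurveIdeal k a := by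
      rw [Ideal.span_le]
      rintro g ⟨i, rfl⟩
      exact hmem i
    have hprime : (monomialCurveIdeal k a).IsPrime := RingHom.ker_isPrime _
    calc (Ideal.span (Set.range f)).radical
        ≤ (monomialCurveIdeal k a).radical := Ideal.radical_mono hspan
      _ = monomialCurveIdeal k a := hprime.radical
  · -- p ≤ radical span
    rw [Ideal.radical_eq_sInf]
    refine le_sInf ?_
    rintro q ⟨hq, hqp⟩
    intro g hg
    haveI := hqp
    -- pass to the fraction field of the quotient
    letI R0 := MvPolynomial (Fin (D + 3)) k ⧸ q
    letI K := FractionRing R0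
    letI φ : MvPolynomial (Fin (D + 3)) k →+* K :=
      (algebraMap R0 K).comp (Ideal.Quotient.mk q)
    letI : Algebra k K := (φ.comp MvPolynomial.C).toAlgebra
    letI Φ : MvPolynomial (Fin (D + 3)) k →ₐ[k] K :=
      { toRingHom := φ, commutes' := fun c => rfl }
    set x : Fin (D + 3) → K := fun i => φ (MvPolynomial.X i) with hx
    have hΦ : ∀ p : MvPolynomial (Fin (D + 3)) k, MvPolynomial.aeval x p = Φ p := by
      intro p
      conv_rhs => rw [MvPolynomial.aeval_unique Φ]
      rfl
    have hker : ∀ p : MvPolynomial (Fin (D + 3)) k, φ p = 0 → p ∈ q := by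
      intro p hp
      have h2 : Ideal.Quotient.mk q p = 0 := by
        apply IsFractionRing.injective R0 K
        rw [map_zero]
        exact hp
      exact (Ideal.Quotient.eq_zero_iff_mem).mp h2
    have hfq : ∀ i, φ (f i) = 0 := by
      intro i
      have hmemq : f i ∈ q := hq (Ideal.subset_span ⟨i, rfl⟩)
      show (algebraMap R0 K) (Ideal.Quotient.mk q (f i)) = 0
      rw [Ideal.Quotient.eq_zero_iff_mem.mpr hmemq, map_zero]
    -- the equations hold at the point x
    have hchain : ∀ n, 1 ≤ n → n ≤ D + 1 → MvPolynomial.aeval x (PatilSTCI.chain k D n) = 0 := by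
      intro n hn1 hn2
      have hidx : ((⟨n - 1, by omega⟩ : Fin (D + 3 - 1)) : ℕ) = n - 1 := rfl
      have := hfq ⟨n - 1, by omega⟩
      simp only [hf, hidx] at this
      rw [if_pos (by omega : n - 1 ≤ D)] at this
      have hn' : n - 1 + 1 = n := by omega
      rw [hn'] at this
      rw [hΦ]
      exact this
    have hlast : MvPolynomial.aeval x (PatilSTCI.lastP k D A m) = 0 := by
      have hval : ((⟨D + 1, by omega⟩ : Fin (D + 3 - 1)) : ℕ) = D + 1 := rfl
      have := hfq ⟨D + 1, by omega⟩
      simp only [hf, hval] at this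
      rw [if_neg (by omega : ¬ D + 1 ≤ D)] at this
      rw [hΦ]
      exact this
    obtain ⟨t, ht⟩ := PatilSTCI.main_point k D A m hA hm hco x hchain hlast
    -- conclude g ∈ q
    apply hker
    have hcomp : (Polynomial.aeval t).comp
        (MvPolynomial.aeval (R := k) fun i : Fin (D + 3) => (Polynomial.X : Polynomial k) ^ a i)
        = (MvPolynomial.aeval x : MvPolynomial (Fin (D + 3)) k →ₐ[k] K) := by
      apply MvPolynomial.algHom_ext
      intro i
      simp only [AlgHom.comp_apply, MvPolynomial.aeval_X, map_pow, Polynomial.aeval_X]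
      rw [ht i, ha i]
    have hg0 : (MvPolynomial.aeval (R := k) fun i : Fin (D + 3) =>
        (Polynomial.X : Polynomial k) ^ a i) g = 0 := by
      rw [monomialCurveIdeal, RingHom.mem_ker] at hg
      exact hg
    have : φ g = Φ g := rfl
    rw [this, ← hΦ, ← hcomp]
    simp only [AlgHom.comp_apply, hg0, map_zero]
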